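/- Let f : ℂ → ℂ be continuous on an open set U ⊆ ℂ and complex differentiable at every point of U \ X, where X ⊆ U is a compact countable set with exactly one accumulation point w, and w ∈ X. If △(z₁, z₂, z₃) is a triangle contained in U and w lies on the edge of the triangle joining z₁ and z₂ (i.e., w belongs to the segment [z₁, z₂]), then the integral of f along the closed polygonal path [z₁, z₂, z₃, z₁] equals 0. -/

import Mathlib

open Set

/-- The complex line integral of `f` along the segment from `a` to `b`:
`∫_{t ∈ [0,1]} f((1-t)·a + t·b) · (b - a) dt`. -/
noncomputable def segmentIntegral (f : ℂ → ℂ) (a b : ℂ) : ℂ :=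
  ∫ t in (0:ℝ)..1, f ((1 - t) • a + t • b) * (b - a)

/-- The integral of `f` along the closed polygonal path `[z₁, z₂, z₃, z₁]`. -/
noncomputable def triangleIntegral (f : ℂ → ℂ) (z₁ z₂ z₃ : ℂ) : ℂ :=
  segmentIntegral f z₁ z₂ + segmentIntegral f z₂ z₃ + segmentIntegral f z₃ z₁

/-- `w` is an accumulation point of `X`: every neighborhood of `w` contains a
point of `X` other than `w`. -/
def IsAccumulationPoint (w : ℂ) (X : Set ℂ) : Prop :=
  ∀ V ∈ nhds w, ∃ x, x ∈ V ∩ X ∧ x ≠ w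

open MeasureTheory in
/-- Cauchy–Goursat for a triangle, for a function differentiable on an open set
containing the (filled) triangle, proved via Green's theorem on the unit square. -/
lemma triangleIntegral_eq_zero_of_differentiableAt (f : ℂ → ℂ) (U : Set ℂ) (hU : IsOpen U)
    (hd : ∀ z ∈ U, DifferentiableAt ℂ f z) (a b c : ℂ)
    (h : convexHull ℝ {a, b, c} ⊆ U) :
    triangleIntegral f a b c = 0 := by
  -- the parametrization of the triangle by the unit square
  set φ : ℝ × ℝ → ℂ := fun p => a + p.1 • (b - a) + (p.1 * p.2) • (c - b) with hφ_def
  set Φx : ℝ × ℝ → ℂ := fun p => (b - a) + p.2 • (c - b) with hΦx_def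
  set Φy : ℝ × ℝ → ℂ := fun p => p.1 • (c - b) with hΦy_def
  set D : ℝ × ℝ → (ℝ × ℝ →L[ℝ] ℂ) := fun p =>
    (ContinuousLinearMap.fst ℝ ℝ ℝ).smulRight (Φx p) +
      (ContinuousLinearMap.snd ℝ ℝ ℝ).smulRight (Φy p) with hD_def
  have hφmem : ∀ p : ℝ × ℝ, p ∈ Icc ((0:ℝ), (0:ℝ)) (1, 1) → φ p ∈ convexHull ℝ {a, b, c} := by
    rintro ⟨x, y⟩ ⟨⟨hx0, hy0⟩, ⟨hx1, hy1⟩⟩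
    dsimp only at hx0 hy0 hx1 hy1
    have ha : a ∈ convexHull ℝ ({a, b, c} : Set ℂ) := subset_convexHull ℝ _ (by simp)
    have hb : b ∈ convexHull ℝ ({a, b, c} : Set ℂ) := subset_convexHull ℝ _ (by simp)
    have hc : c ∈ convexHull ℝ ({a, b, c} : Set ℂ) := subset_convexHull ℝ _ (by simp)
    have hq : (1 - y) • b + y • c ∈ convexHull ℝ ({a, b, c} : Set ℂ) :=
      (convex_convexHull ℝ _) hb hc (by linarith) (by linarith) (by ring)
    have h2 : (1 - x) • a + x • ((1 - y) • b + y • c) ∈ convexHull ℝ ({a, b, c} : Set ℂ) :=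
      (convex_convexHull ℝ _) ha hq (by linarith) (by linarith) (by ring)
    have : φ (x, y) = (1 - x) • a + x • ((1 - y) • b + y • c) := by
      simp only [hφ_def, Complex.real_smul]
      push_cast
      ring
    rw [this]; exact h2
  have hφU : ∀ p : ℝ × ℝ, p ∈ Icc ((0:ℝ), (0:ℝ)) (1, 1) → φ p ∈ U := fun p hp => h (hφmem p hp)
  have hφderiv : ∀ p : ℝ × ℝ, HasFDerivAt φ (D p) p := by
    intro p
    have h1 : HasFDerivAt (fun p : ℝ × ℝ => p.1) (ContinuousLinearMap.fst ℝ ℝ ℝ) p :=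
      hasFDerivAt_fst
    have h2 : HasFDerivAt (fun p : ℝ × ℝ => p.2) (ContinuousLinearMap.snd ℝ ℝ ℝ) p :=
      hasFDerivAt_snd
    have h3 := h1.mul h2
    have h4 := ((h1.smul_const (b - a)).const_add a).add (h3.smul_const (c - b))
    refine h4.congr_fderiv ?_
    apply ContinuousLinearMap.ext
    intro v
    simp only [hD_def, hΦx_def, hΦy_def, ContinuousLinearMap.add_apply,
      ContinuousLinearMap.smulRight_apply, ContinuousLinearMap.coe_fst',
      ContinuousLinearMap.coe_snd', ContinuousLinearMap.smul_apply,
      smul_smul, smul_add, smul_eq_mul]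
    module
  -- the two components of the pulled-back 1-form
  set M : ℝ × ℝ → ℂ := fun p => f (φ p) * Φx p with hM_def
  set N : ℝ × ℝ → ℂ := fun p => f (φ p) * Φy p with hN_def
  set DM : ℝ × ℝ → (ℝ × ℝ →L[ℝ] ℂ) := fun p =>
    f (φ p) • ((ContinuousLinearMap.snd ℝ ℝ ℝ).smulRight (c - b)) +
      Φx p • (deriv f (φ p) • D p) with hDM_def
  set DN : ℝ × ℝ → (ℝ × ℝ →L[ℝ] ℂ) := fun p =>
    f (φ p) • ((ContinuousLinearMap.fst ℝ ℝ ℝ).smulRight (c - b)) +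
      Φy p • (deriv f (φ p) • D p) with hDN_def
  have hfφ : ∀ p : ℝ × ℝ, φ p ∈ U →
      HasFDerivAt (fun q => f (φ q)) (deriv f (φ p) • D p) p := fun p hp =>
    HasDerivAt.comp_hasFDerivAt p (hd _ hp).hasDerivAt (hφderiv p)
  have hΦxderiv : ∀ p : ℝ × ℝ,
      HasFDerivAt Φx ((ContinuousLinearMap.snd ℝ ℝ ℝ).smulRight (c - b)) p := fun p =>
    (hasFDerivAt_snd.smul_const (c - b)).const_add (b - a)
  have hΦyderiv : ∀ p : ℝ × ℝ,
      HasFDerivAt Φy ((ContinuousLinearMap.fst ℝ ℝ ℝ).smulRight (c - b)) p := fun p =>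
    hasFDerivAt_fst.smul_const (c - b)
  have hMderiv : ∀ p : ℝ × ℝ, φ p ∈ U → HasFDerivAt M (DM p) p := fun p hp =>
    (hfφ p hp).mul (hΦxderiv p)
  have hNderiv : ∀ p : ℝ × ℝ, φ p ∈ U → HasFDerivAt N (DN p) p := fun p hp =>
    (hfφ p hp).mul (hΦyderiv p)
  have hφcont : Continuous φ := by
    apply Continuous.add
    · exact (continuous_const.add (continuous_fst.smul continuous_const))
    · exact (continuous_fst.mul continuous_snd).smul continuous_const
  have hfφcont : ContinuousOn (fun p => f (φ p)) (Icc ((0:ℝ), (0:ℝ)) (1, 1)) := by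
    intro p hp
    exact ((hd _ (hφU p hp)).continuousAt.comp hφcont.continuousAt).continuousWithinAt
  have hMcont : ContinuousOn M (Icc ((0:ℝ), (0:ℝ)) (1, 1)) :=
    hfφcont.mul ((continuous_const.add (continuous_snd.smul continuous_const)).continuousOn)
  have hNcont : ContinuousOn N (Icc ((0:ℝ), (0:ℝ)) (1, 1)) :=
    hfφcont.mul ((continuous_fst.smul continuous_const).continuousOn)
  -- the divergence of the pulled-back field vanishes identically
  have hzero : (fun p : ℝ × ℝ => DN p (1, 0) + (-(DM p)) (0, 1)) = fun _ => (0:ℂ) := by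
    funext p
    simp only [hDN_def, hDM_def, hD_def, hΦx_def, hΦy_def, ContinuousLinearMap.add_apply,
      ContinuousLinearMap.smulRight_apply, ContinuousLinearMap.coe_fst',
      ContinuousLinearMap.coe_snd', ContinuousLinearMap.smul_apply,
      ContinuousLinearMap.neg_apply, Complex.real_smul, smul_eq_mul]
    push_cast
    ring
  have key := MeasureTheory.integral_divergence_prod_Icc_of_hasFDerivAt_off_countable_of_le
    N (fun p => -(M p)) DN (fun p => -(DM p)) ((0:ℝ), (0:ℝ)) (1, 1)
    (by constructor <;> norm_num) ∅ countable_empty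
    hNcont hMcont.neg
    (fun p hp => hNderiv p (hφU p ⟨⟨hp.1.1.1.le, hp.1.2.1.le⟩, hp.1.1.2.le, hp.1.2.2.le⟩))
    (fun p hp => (hMderiv p (hφU p ⟨⟨hp.1.1.1.le, hp.1.2.1.le⟩, hp.1.1.2.le, hp.1.2.2.le⟩)).neg)
    (by rw [hzero]; exact integrableOn_zero)
  rw [hzero] at key
  simp only [MeasureTheory.integral_zero, intervalIntegral.integral_neg] at key
  -- identify the four boundary integrals
  have harg1 : ∀ t : ℝ, a + t • (b - a) = (1 - t) • a + t • b := fun t => by module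
  have harg2 : ∀ t : ℝ, a + (b - a) + t • (c - b) = (1 - t) • b + t • c := fun t => by module
  have e1 : (∫ x in (0:ℝ)..1, M (x, 0)) = segmentIntegral f a b := by
    rw [segmentIntegral]
    apply intervalIntegral.integral_congr
    intro t ht
    simp only [hM_def, hφ_def, hΦx_def]
    norm_num
    left
    congr 1
    push_cast
    ring
  have e2 : (∫ y in (0:ℝ)..1, N (1, y)) = segmentIntegral f b c := by
    rw [segmentIntegral]
    apply intervalIntegral.integral_congr
    intro t ht
    simp only [hN_def, hφ_def, hΦy_def]
    norm_num
    left
    congr 1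
    push_cast
    ring
  have e4 : (∫ y in (0:ℝ)..1, N (0, y)) = 0 := by
    simp [hN_def, hΦy_def]
  have e3 : segmentIntegral f c a = - ∫ x in (0:ℝ)..1, M (x, 1) := by
    have hsub := intervalIntegral.integral_comp_sub_left (a := (0:ℝ)) (b := 1)
      (fun s => f ((1 - s) • c + s • a) * (a - c)) 1
    rw [show (1:ℝ) - 1 = 0 by norm_num, show (1:ℝ) - 0 = 1 by norm_num] at hsub
    rw [segmentIntegral, ← hsub, ← intervalIntegral.integral_neg]
    apply intervalIntegral.integral_congr
    intro t ht
    show f ((1 - (1 - t)) • c + (1 - t) • a) * (a - c) = -(M (t, 1))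
    simp only [hM_def, hφ_def, hΦx_def, one_smul, mul_one]
    rw [show (1 - (1 - t)) • c + (1 - t) • a = a + t • (b - a) + t • (c - b) by module]
    ring
  rw [triangleIntegral, ← e1, ← e2, e3]
  linear_combination e4 - key

theorem stmt_6 (f : ℂ → ℂ) (U : Set ℂ) (hU : IsOpen U)
    (hf : ContinuousOn f U) (X : Set ℂ) (hXU : X ⊆ U)
    (hXcomp : IsCompact X) (hXcount : X.Countable)
    (w : ℂ) (hacc : {p | IsAccumulationPoint p X} = {w}) (hwX : w ∈ X)
    (z₁ z₂ z₃ : ℂ) (htri : convexHull ℝ {z₁, z₂, z₃} ⊆ U)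
    (hd : ∀ z ∈ U \ X, DifferentiableAt ℂ f z)
    (hedge : w ∈ convexHull ℝ {z₁, z₂}) :
    triangleIntegral f z₁ z₂ z₃ = 0 := by
  have hwU : U ∈ nhds w := hU.mem_nhds (hXU hwX)
  have key : ∀ z ∈ U, z ≠ w → DifferentiableAt ℂ f z := by
    intro z hzU hzw
    by_cases hzX : z ∈ X
    · have hnacc : ¬ IsAccumulationPoint z X := by
        intro hz
        have hmem : z ∈ ({w} : Set ℂ) := hacc ▸ (mem_setOf.2 hz)
        exact hzw (by simpa using hmem)
      rw [IsAccumulationPoint] at hnacc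
      push_neg at hnacc
      obtain ⟨V, hV, hVX⟩ := hnacc
      set s := interior V ∩ U with hs_def
      have hs_open : IsOpen s := isOpen_interior.inter hU
      have hzs : z ∈ s := ⟨mem_interior_iff_mem_nhds.2 hV, hzU⟩
      have hsub : DifferentiableOn ℂ f (s \ {z}) := by
        intro y hy
        refine (hd y ⟨hy.1.2, fun hyX => ?_⟩).differentiableWithinAt
        exact hy.2 (by simp [hVX y ⟨interior_subset hy.1.1, hyX⟩])
      have hres := (Complex.differentiableOn_compl_singleton_and_continuousAt_iff
        (hs_open.mem_nhds hzs)).1 ⟨hsub, hf.continuousAt (hU.mem_nhds hzU)⟩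
      exact hres.differentiableAt (hs_open.mem_nhds hzs)
    · exact hd z ⟨hzU, hzX⟩
  have hall : ∀ z ∈ U, DifferentiableAt ℂ f z := by
    have hUdiff : DifferentiableOn ℂ f U :=
      (Complex.differentiableOn_compl_singleton_and_continuousAt_iff hwU).1
        ⟨fun z hz => (key z hz.1 (by simpa using hz.2)).differentiableWithinAt,
          hf.continuousAt hwU⟩
    exact fun z hz => hUdiff.differentiableAt (hU.mem_nhds hz)
  exact triangleIntegral_eq_zero_of_differentiableAt f U hU hall z₁ z₂ z₃ htri
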